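/- For every positive integer N, (1/2)·(the sum of (n−m) over pairs of odd positive integers (n,m) with n² − m² = 8N) equals the sum of u over all factorizations uv = 2N with 0 < u < v and u+v odd, which in turn equals (1/2)·s(2N) − s(N/2), where s(k) = Σ_{d|k} min(d, k/d) and s(N/2) = 0 when N is odd. -/

import Mathlib

/-- `s(k) = ∑_{d ∣ k} min(d, k/d)`. -/
def sdiv (k : ℕ) : ℕ := ∑ d ∈ k.divisors, min d (k / d)

/-- Pairs `(n, m)` of odd positive integers with `n² − m² = 8N`. -/
def oddDiffSquarePairs (N : ℕ) : Finset (ℕ × ℕ) :=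
  (Finset.Icc 1 (8 * N) ×ˢ Finset.Icc 1 (8 * N)).filter
    fun p => Odd p.1 ∧ Odd p.2 ∧ p.1 ^ 2 = p.2 ^ 2 + 8 * N

lemma part1 (N : ℕ) (hN : 0 < N) :
    (1 / 2 : ℚ) * ∑ p ∈ oddDiffSquarePairs N, ((p.1 : ℚ) - (p.2 : ℚ))
      = ∑ u ∈ (2 * N).divisors.filter (fun u => u < 2 * N / u ∧ Odd (u + 2 * N / u)), (u : ℚ) := by
  rw [Finset.mul_sum]
  refine Finset.sum_nbij' (fun p => (p.1 - p.2) / 2)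
    (fun u => (u + 2 * N / u, 2 * N / u - u)) ?_ ?_ ?_ ?_ ?_
  · rintro ⟨n, m⟩ hp
    simp only [oddDiffSquarePairs, Finset.mem_filter, Finset.mem_product, Finset.mem_Icc] at hp
    obtain ⟨⟨⟨hn1, hn2⟩, hm1, hm2⟩, hon, hom, heq⟩ := hp
    have hmn : m < n := by nlinarith
    obtain ⟨c, hc⟩ : Even (n - m) := Nat.Odd.sub_odd hon hom
    obtain ⟨d, hd⟩ : Even (n + m) := Odd.add_odd hon hom
    have hn' : n = m + 2 * c := by omega
    have hd' : d = m + c := by omega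
    have hcd : c * d = 2 * N := by nlinarith
    have hc0 : 0 < c := by omega
    have hdiv : 2 * N / c = d := by rw [← hcd, Nat.mul_div_cancel_left _ hc0]
    have hu : (n - m) / 2 = c := by omega
    simp only [Finset.mem_filter, Nat.mem_divisors, hu, hdiv]
    refine ⟨⟨⟨d, hcd.symm⟩, by positivity⟩, by omega, ?_⟩
    have hcdn : c + d = n := by omega
    rw [hcdn]; exact hon
  · rintro u hu
    simp only [Finset.mem_filter, Nat.mem_divisors] at hu
    obtain ⟨⟨hdvd, hk0⟩, hlt, hodd⟩ := hu
    set v := 2 * N / u with hv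
    have hu0 : 0 < u := Nat.pos_of_dvd_of_pos hdvd (by omega)
    have huv : u * v = 2 * N := Nat.mul_div_cancel' hdvd
    have hvle : v ≤ 2 * N := Nat.div_le_self _ _
    have hule : u ≤ 2 * N := Nat.le_of_dvd (by omega) hdvd
    have hon : Odd (u + v) := hodd
    have hom : Odd (v - u) := by rw [Nat.odd_iff] at hon ⊢; omega
    simp only [oddDiffSquarePairs, Finset.mem_filter, Finset.mem_product, Finset.mem_Icc]
    refine ⟨⟨⟨by omega, by omega⟩, by omega, by omega⟩, hon, hom, ?_⟩
    obtain ⟨w, hw⟩ := Nat.exists_eq_add_of_lt hlt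
    have hsub : v - u = w + 1 := by omega
    rw [hsub, hw]
    nlinarith [huv, hw]
  · rintro ⟨n, m⟩ hp
    simp only [oddDiffSquarePairs, Finset.mem_filter, Finset.mem_product, Finset.mem_Icc] at hp
    obtain ⟨⟨⟨hn1, hn2⟩, hm1, hm2⟩, hon, hom, heq⟩ := hp
    have hmn : m < n := by nlinarith
    obtain ⟨c, hc⟩ : Even (n - m) := Nat.Odd.sub_odd hon hom
    obtain ⟨d, hd⟩ : Even (n + m) := Odd.add_odd hon hom
    have hn' : n = m + 2 * c := by omega
    have hd' : d = m + c := by omega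
    have hcd : c * d = 2 * N := by nlinarith
    have hc0 : 0 < c := by omega
    have hdiv : 2 * N / c = d := by rw [← hcd, Nat.mul_div_cancel_left _ hc0]
    have hu : (n - m) / 2 = c := by omega
    simp only [hu, hdiv, Prod.mk.injEq]
    omega
  · rintro u hu
    simp only [Finset.mem_filter, Nat.mem_divisors] at hu
    obtain ⟨⟨hdvd, hk0⟩, hlt, hodd⟩ := hu
    simp only
    omega
  · rintro ⟨n, m⟩ hp
    simp only [oddDiffSquarePairs, Finset.mem_filter, Finset.mem_product, Finset.mem_Icc] at hp
    obtain ⟨⟨⟨hn1, hn2⟩, hm1, hm2⟩, hon, hom, heq⟩ := hp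
    have hmn : m < n := by nlinarith
    obtain ⟨c, hc⟩ : Even (n - m) := Nat.Odd.sub_odd hon hom
    have hu : (n - m) / 2 = c := by omega
    have hn' : n = m + 2 * c := by omega
    simp only [hu]
    rw [hn']
    push_cast
    ring

lemma sdiv_eq (k : ℕ) :
    sdiv k = 2 * (∑ d ∈ k.divisors.filter (fun d => d < k / d), d)
      + ∑ d ∈ k.divisors.filter (fun d => d = k / d), d := by
  rw [sdiv, ← Finset.sum_filter_add_sum_filter_not k.divisors (fun d => d < k / d)]
  have h1 : ∑ d ∈ k.divisors.filter (fun d => d < k / d), min d (k / d)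
      = ∑ d ∈ k.divisors.filter (fun d => d < k / d), d := by
    refine Finset.sum_congr rfl fun d hd => ?_
    simp only [Finset.mem_filter] at hd; omega
  have h2 : k.divisors.filter (fun d => ¬ d < k / d)
      = k.divisors.filter (fun d => k / d < d) ∪ k.divisors.filter (fun d => d = k / d) := by
    rw [← Finset.filter_or]
    exact Finset.filter_congr fun d _ => by omega
  rw [h1, h2, Finset.sum_union]
  · have h3 : ∑ d ∈ k.divisors.filter (fun d => k / d < d), min d (k / d)
        = ∑ d ∈ k.divisors.filter (fun d => d < k / d), d := by
      refine Finset.sum_nbij' (fun d => k / d) (fun d => k / d) ?_ ?_ ?_ ?_ ?_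
      · intro d hd
        simp only [Finset.mem_filter, Nat.mem_divisors] at hd ⊢
        obtain ⟨⟨hdvd, hk⟩, hlt⟩ := hd
        exact ⟨⟨Nat.div_dvd_of_dvd hdvd, hk⟩, by rw [Nat.div_div_self hdvd hk]; exact hlt⟩
      · intro d hd
        simp only [Finset.mem_filter, Nat.mem_divisors] at hd ⊢
        obtain ⟨⟨hdvd, hk⟩, hlt⟩ := hd
        exact ⟨⟨Nat.div_dvd_of_dvd hdvd, hk⟩, by rw [Nat.div_div_self hdvd hk]; exact hlt⟩
      · intro d hd
        simp only [Finset.mem_filter, Nat.mem_divisors] at hd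
        exact Nat.div_div_self hd.1.1 hd.1.2
      · intro d hd
        simp only [Finset.mem_filter, Nat.mem_divisors] at hd
        exact Nat.div_div_self hd.1.1 hd.1.2
      · intro d hd
        simp only [Finset.mem_filter] at hd
        show min d (k / d) = k / d
        omega
    have h4 : ∑ d ∈ k.divisors.filter (fun d => d = k / d), min d (k / d)
        = ∑ d ∈ k.divisors.filter (fun d => d = k / d), d := by
      refine Finset.sum_congr rfl fun d hd => ?_
      simp only [Finset.mem_filter] at hd; omega
    rw [h3, h4]; ring
  · rw [Finset.disjoint_left]
    intro d hd hd'
    simp only [Finset.mem_filter] at hd hd'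
    omega

lemma Bsum (M : ℕ) (hM : M ≠ 0) :
    ∑ d ∈ (4*M).divisors.filter (fun d => d < 4*M/d ∧ ¬ Odd (d + 4*M/d)), d
      = 2 * ∑ a ∈ M.divisors.filter (fun a => a < M/a), a := by
  rw [Finset.mul_sum, eq_comm]
  refine Finset.sum_bij (fun a _ => 2 * a) ?_ ?_ ?_ ?_
  · intro a ha
    simp only [Finset.mem_filter, Nat.mem_divisors] at ha ⊢
    obtain ⟨⟨hdvd, _⟩, hlt⟩ := ha
    have ha0 : 0 < a := Nat.pos_of_dvd_of_pos hdvd (Nat.pos_of_ne_zero hM)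
    have hmul : (2 * a) * (2 * (M / a)) = 4 * M := by
      have := Nat.mul_div_cancel' hdvd
      nlinarith
    have hdiv : 4 * M / (2 * a) = 2 * (M / a) :=
      (Nat.div_eq_of_eq_mul_left (by omega) (by rw [← hmul]; ring))
    refine ⟨⟨⟨2 * (M / a), hmul.symm⟩, by omega⟩, by omega, ?_⟩
    rw [hdiv, Nat.odd_iff]; omega
  · exact fun a _ b _ h => Nat.eq_of_mul_eq_mul_left two_pos h
  · intro d hd
    simp only [Finset.mem_filter, Nat.mem_divisors] at hd
    obtain ⟨⟨hdvd, h4M⟩, hlt, heven⟩ := hd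
    have hmul : d * (4 * M / d) = 4 * M := Nat.mul_div_cancel' hdvd
    rw [Nat.odd_iff] at heven
    have hd2 : d % 2 = 0 := by
      rcases Nat.even_or_odd d with h | h
      · exact Nat.even_iff.mp h
      · exfalso
        rcases Nat.even_or_odd (4 * M / d) with h' | h'
        · rw [Nat.odd_iff] at h; rw [Nat.even_iff] at h'; omega
        · have : Odd (d * (4 * M / d)) := h.mul h'
          rw [hmul, Nat.odd_iff] at this; omega
    have he2 : (4 * M / d) % 2 = 0 := by omega
    obtain ⟨a, rfl⟩ : ∃ a, d = 2 * a := ⟨d / 2, by omega⟩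
    obtain ⟨b, hb⟩ : ∃ b, 4 * M / (2 * a) = 2 * b := ⟨(4 * M / (2 * a)) / 2, by omega⟩
    have ha0 : 0 < a := by
      rcases Nat.eq_zero_or_pos a with h | h
      · subst h; simp at hmul; omega
      · exact h
    have hab : a * b = M := by
      rw [hb] at hmul; nlinarith
    have hMa : M / a = b := Nat.div_eq_of_eq_mul_left ha0 (by rw [← hab]; ring)
    refine ⟨a, ?_, rfl⟩
    simp only [Finset.mem_filter, Nat.mem_divisors]
    exact ⟨⟨⟨b, hab.symm⟩, hM⟩, by omega⟩
  · intro a ha; rfl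

lemma Esum (M : ℕ) (hM : M ≠ 0) :
    ∑ d ∈ (4*M).divisors.filter (fun d => d = 4*M/d), d
      = 2 * ∑ a ∈ M.divisors.filter (fun a => a = M/a), a := by
  rw [Finset.mul_sum, eq_comm]
  refine Finset.sum_bij (fun a _ => 2 * a) ?_ ?_ ?_ ?_
  · intro a ha
    simp only [Finset.mem_filter, Nat.mem_divisors] at ha ⊢
    obtain ⟨⟨hdvd, _⟩, heq⟩ := ha
    have ha0 : 0 < a := Nat.pos_of_dvd_of_pos hdvd (Nat.pos_of_ne_zero hM)
    have hmul : (2 * a) * (2 * (M / a)) = 4 * M := by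
      have := Nat.mul_div_cancel' hdvd
      nlinarith
    have hdiv : 4 * M / (2 * a) = 2 * (M / a) :=
      (Nat.div_eq_of_eq_mul_left (by omega) (by rw [← hmul]; ring))
    exact ⟨⟨⟨2 * (M / a), hmul.symm⟩, by omega⟩, by omega⟩
  · exact fun a _ b _ h => Nat.eq_of_mul_eq_mul_left two_pos h
  · intro d hd
    simp only [Finset.mem_filter, Nat.mem_divisors] at hd
    obtain ⟨⟨hdvd, h4M⟩, heq⟩ := hd
    have hmul : d * (4 * M / d) = 4 * M := Nat.mul_div_cancel' hdvd
    rw [← heq] at hmul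
    have hd2 : d % 2 = 0 := by
      rcases Nat.even_or_odd d with h | h
      · exact Nat.even_iff.mp h
      · have : Odd (d * d) := h.mul h
        rw [hmul, Nat.odd_iff] at this; omega
    obtain ⟨a, rfl⟩ : ∃ a, d = 2 * a := ⟨d / 2, by omega⟩
    have ha0 : 0 < a := by
      rcases Nat.eq_zero_or_pos a with h | h
      · subst h; simp at hmul; omega
      · exact h
    have hab : a * a = M := by nlinarith
    have hMa : M / a = a := Nat.div_eq_of_eq_mul_left ha0 hab.symm
    refine ⟨a, ?_, rfl⟩
    simp only [Finset.mem_filter, Nat.mem_divisors]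
    exact ⟨⟨⟨a, hab.symm⟩, hM⟩, hMa.symm⟩
  · intro a ha; rfl

lemma Bempty (N : ℕ) (hN : ¬ 2 ∣ N) :
    (2*N).divisors.filter (fun d => d < 2*N/d ∧ ¬ Odd (d + 2*N/d)) = ∅ := by
  rw [Finset.filter_eq_empty_iff]
  intro d hd
  simp only [Nat.mem_divisors] at hd
  obtain ⟨hdvd, hk⟩ := hd
  rintro ⟨hlt, heven⟩
  have hmul : d * (2 * N / d) = 2 * N := Nat.mul_div_cancel' hdvd
  rw [Nat.odd_iff] at heven
  rcases Nat.even_or_odd d with h | h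
  · rw [Nat.even_iff] at h
    have h2 : (2 * N / d) % 2 = 0 := by omega
    obtain ⟨a, rfl⟩ : ∃ a, d = 2 * a := ⟨d / 2, by omega⟩
    obtain ⟨b, hb⟩ : ∃ b, 2 * N / (2 * a) = 2 * b := ⟨(2 * N / (2 * a)) / 2, by omega⟩
    rw [hb] at hmul
    exact hN ⟨a * b, by nlinarith⟩
  · rcases Nat.even_or_odd (2 * N / d) with h' | h'
    · rw [Nat.odd_iff] at h; rw [Nat.even_iff] at h'; omega
    · have : Odd (d * (2 * N / d)) := h.mul h'
      rw [hmul, Nat.odd_iff] at this; omega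

lemma Eempty (N : ℕ) (hN : ¬ 2 ∣ N) :
    (2*N).divisors.filter (fun d => d = 2*N/d) = ∅ := by
  rw [Finset.filter_eq_empty_iff]
  intro d hd heq
  simp only [Nat.mem_divisors] at hd
  obtain ⟨hdvd, hk⟩ := hd
  have hmul : d * (2 * N / d) = 2 * N := Nat.mul_div_cancel' hdvd
  rw [← heq] at hmul
  rcases Nat.even_or_odd d with h | h
  · rw [Nat.even_iff] at h
    obtain ⟨a, rfl⟩ : ∃ a, d = 2 * a := ⟨d / 2, by omega⟩
    exact hN ⟨a * a, by nlinarith⟩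
  · have : Odd (d * d) := h.mul h
    rw [hmul, Nat.odd_iff] at this; omega

theorem half_sum_oddDiffSquarePairs (N : ℕ) (hN : 0 < N) :
    (1 / 2 : ℚ) * ∑ p ∈ oddDiffSquarePairs N, ((p.1 : ℚ) - (p.2 : ℚ))
        = ∑ u ∈ (2 * N).divisors.filter (fun u => u < 2 * N / u ∧ Odd (u + 2 * N / u)), (u : ℚ)
      ∧ ∑ u ∈ (2 * N).divisors.filter (fun u => u < 2 * N / u ∧ Odd (u + 2 * N / u)), (u : ℚ)
        = (1 / 2 : ℚ) * (sdiv (2 * N) : ℚ)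
            - (if 2 ∣ N then (sdiv (N / 2) : ℚ) else 0) := by
  refine ⟨part1 N hN, ?_⟩
  set SA := ∑ d ∈ (2*N).divisors.filter (fun d => d < 2*N/d ∧ Odd (d + 2*N/d)), d with hSA
  set SB := ∑ d ∈ (2*N).divisors.filter (fun d => d < 2*N/d ∧ ¬ Odd (d + 2*N/d)), d with hSB
  set SE := ∑ d ∈ (2*N).divisors.filter (fun d => d = 2*N/d), d with hSE
  have hsplitL : ∑ d ∈ (2*N).divisors.filter (fun d => d < 2*N/d), d = SA + SB := by
    rw [hSA, hSB, ← Finset.sum_filter_add_sum_filter_not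
      ((2*N).divisors.filter (fun d => d < 2*N/d)) (fun d => Odd (d + 2*N/d)),
      Finset.filter_filter, Finset.filter_filter]
  have e1 : sdiv (2*N) = 2 * (SA + SB) + SE := by
    rw [sdiv_eq, hsplitL]
  have e2 : (if 2 ∣ N then sdiv (N/2) else 0) * 2 = SB * 2 + SE := by
    by_cases h : 2 ∣ N
    · obtain ⟨M, rfl⟩ := h
      have hM : M ≠ 0 := by omega
      rw [if_pos (dvd_mul_right 2 M), Nat.mul_div_cancel_left M two_pos, hSB, hSE,
        show 2 * (2 * M) = 4 * M from by ring, Bsum M hM, Esum M hM, sdiv_eq M]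
      ring
    · rw [if_neg h, hSB, hSE, Bempty N h, Eempty N h]
      simp
  have hA : ∑ u ∈ (2 * N).divisors.filter (fun u => u < 2 * N / u ∧ Odd (u + 2 * N / u)), (u : ℚ)
      = (SA : ℚ) := by
    rw [hSA]; push_cast; rfl
  have hite : (if 2 ∣ N then (sdiv (N / 2) : ℚ) else 0)
      = ((if 2 ∣ N then sdiv (N/2) else 0 : ℕ) : ℚ) := by
    split <;> simp
  have c1 : (sdiv (2*N) : ℚ) = 2 * ((SA : ℚ) + (SB : ℚ)) + (SE : ℚ) := by exact_mod_cast e1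
  have c2 : ((if 2 ∣ N then sdiv (N/2) else 0 : ℕ) : ℚ) * 2 = (SB : ℚ) * 2 + (SE : ℚ) := by
    exact_mod_cast e2
  rw [hA, hite, c1]
  linarith [c2]
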